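/- (Batch IST convergence.) The iterates x_t = Γ(x_{t−1}), x_0 = 0, of batch IST for the Elastic-net converge to the unique minimizer z of f, with geometric rate ‖x_t − z‖₂ ≤ (1 + μτ)^{−t}‖x_0 − z‖₂. -/

import Mathlib

open scoped RealInnerProductSpace
set_option maxHeartbeats 1000000

/-- Scalar soft thresholding operator. -/
noncomputable def softThresh (β z : ℝ) : ℝ :=
  if β < z then z - β else if z < -β then z + β else 0

/-- Componentwise soft thresholding on ℝⁿ. -/
noncomputable def softThreshVec {n : ℕ} (β : ℝ) (x : EuclideanSpace ℝ (Fin n)) :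
    EuclideanSpace ℝ (Fin n) :=
  WithLp.toLp 2 (fun i => softThresh β (x i))

/-- The ℓ¹ norm on ℝⁿ. -/
noncomputable def l1norm {n : ℕ} (x : EuclideanSpace ℝ (Fin n)) : ℝ := ∑ i, |x i|

/-- The Elastic-net functional f(x) = (1/2)‖y − Ax‖² + λ‖x‖₁ + (μ/2)‖x‖². -/
noncomputable def enet {n m : ℕ} (A : EuclideanSpace ℝ (Fin n) →L[ℝ] EuclideanSpace ℝ (Fin m))
    (y : EuclideanSpace ℝ (Fin m)) (lam μ : ℝ) (x : EuclideanSpace ℝ (Fin n)) : ℝ :=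
  (1/2) * ‖y - A x‖^2 + lam * l1norm x + (μ/2) * ‖x‖^2

/-- The IST map Γ(x) = S_{λτ/(μτ+1)}[(x + τAᵀ(y − Ax))/(1 + μτ)]. -/
noncomputable def istMap {n m : ℕ} (A : EuclideanSpace ℝ (Fin n) →L[ℝ] EuclideanSpace ℝ (Fin m))
    (y : EuclideanSpace ℝ (Fin m)) (lam μ τ : ℝ) (x : EuclideanSpace ℝ (Fin n)) :
    EuclideanSpace ℝ (Fin n) :=
  softThreshVec (lam * τ / (μ * τ + 1))
    ((1 + μ * τ)⁻¹ • (x + τ • (ContinuousLinearMap.adjoint A) (y - A x)))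

/-- soft thresholding is 1-Lipschitz -/
lemma softThresh_lip {β : ℝ} (hβ : 0 ≤ β) (p q : ℝ) :
    |softThresh β p - softThresh β q| ≤ |p - q| := by
  unfold softThresh
  split_ifs <;>
    (rcases le_or_gt 0 (p - q) with h | h
     · rw [abs_of_nonneg h, abs_le]; constructor <;> linarith
     · rw [abs_of_neg h, abs_le]; constructor <;> linarith)

/-- the soft threshold minimizes the 1-d strongly convex surrogate -/
lemma softThresh_opt {a lam : ℝ} (b : ℝ) (ha : 0 < a) (hlam : 0 ≤ lam) (s : ℝ) :
    a/2*(softThresh (lam/a) (b/a))^2 - b*(softThresh (lam/a) (b/a))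
      + lam*|softThresh (lam/a) (b/a)| + a/2*(s - softThresh (lam/a) (b/a))^2
    ≤ a/2*s^2 - b*s + lam*|s| := by
  set t := softThresh (lam/a) (b/a) with ht
  have key : (a*t - b)*t + lam*|t| ≤ (a*t - b)*s + lam*|s| := by
    rw [ht]; unfold softThresh
    split_ifs with h1 h2
    · have hb : lam < b := (div_lt_div_iff_of_pos_right ha).mp h1
      have h0 : 0 ≤ b/a - lam/a := by
        rw [sub_nonneg]; exact le_of_lt h1
      have hd : a * (b/a - lam/a) - b = -lam := by field_simp; ring
      rw [hd, abs_of_nonneg h0]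
      nlinarith [le_abs_self s]
    · have hb : b < -lam := by
        rw [← neg_div] at h2
        have := (div_lt_div_iff_of_pos_right ha).mp h2
        linarith
      have h0 : b/a + lam/a ≤ 0 := by
        rw [← add_div]
        exact div_nonpos_of_nonpos_of_nonneg (by linarith) (le_of_lt ha)
      have hd : a * (b/a + lam/a) - b = lam := by field_simp; ring
      rw [hd, abs_of_nonpos h0]
      nlinarith [neg_abs_le s]
    · have hb1 : b ≤ lam := by
        have := not_lt.mp h1
        calc b = (b/a)*a := by field_simp
        _ ≤ (lam/a)*a := by nlinarith
        _ = lam := by field_simp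
      have hb2 : -lam ≤ b := by
        have := not_lt.mp h2
        have : -(lam/a) ≤ b/a := this
        calc -lam = (-(lam/a))*a := by field_simp
        _ ≤ (b/a)*a := by nlinarith
        _ = b := by field_simp
      simp only [abs_zero, mul_zero, zero_mul, add_zero, zero_add, sub_zero, mul_zero]
      nlinarith [abs_nonneg s, le_abs_self s, neg_abs_le s]
  have h2 : a/2*s^2 - b*s - (a/2*t^2 - b*t + a/2*(s-t)^2) = (a*t-b)*s - (a*t-b)*t := by ring
  linarith [key, h2]

lemma euc_norm_sq {n : ℕ} (v : EuclideanSpace ℝ (Fin n)) : ‖v‖^2 = ∑ i, (v i)^2 := by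
  rw [EuclideanSpace.norm_eq, Real.sq_sqrt (by positivity)]
  simp [Real.norm_eq_abs, sq_abs]

lemma euc_inner_sum {n : ℕ} (u v : EuclideanSpace ℝ (Fin n)) : ⟪u, v⟫ = ∑ i, u i * v i := by
  simp [PiLp.inner_apply, RCLike.inner_apply]
  exact Finset.sum_congr rfl (fun _ _ => mul_comm _ _)

lemma euc_norm_le {n : ℕ} {u v : EuclideanSpace ℝ (Fin n)} (h : ∀ i, |u i| ≤ |v i|) :
    ‖u‖ ≤ ‖v‖ := by
  rw [EuclideanSpace.norm_eq, EuclideanSpace.norm_eq]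
  apply Real.sqrt_le_sqrt
  apply Finset.sum_le_sum
  intro i _
  simp only [Real.norm_eq_abs]
  have := h i
  nlinarith [abs_nonneg (u i), abs_nonneg (v i)]

lemma key_op_bound {n m : ℕ} (A : EuclideanSpace ℝ (Fin n) →L[ℝ] EuclideanSpace ℝ (Fin m))
    {τ : ℝ} (hτ : 0 < τ) (hA : τ * ‖A‖^2 ≤ 1) (w : EuclideanSpace ℝ (Fin n)) :
    ‖w - τ • (ContinuousLinearMap.adjoint A) (A w)‖ ≤ ‖w‖ := by
  set B := ContinuousLinearMap.adjoint A with hB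
  set u := B (A w) with hu
  have h1 : ‖w - τ • u‖^2 = ‖w‖^2 - 2*(τ*⟪w, u⟫) + τ^2*‖u‖^2 := by
    rw [norm_sub_sq_real, real_inner_smul_right, norm_smul]
    rw [Real.norm_eq_abs, abs_of_pos hτ, mul_pow]
  have h2 : ⟪w, u⟫ = ‖A w‖^2 := by
    rw [hu, hB, ContinuousLinearMap.adjoint_inner_right, real_inner_self_eq_norm_sq]
  have h3 : ‖u‖ ≤ ‖A‖ * ‖A w‖ := by
    calc ‖u‖ ≤ ‖B‖ * ‖A w‖ := B.le_opNorm _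
    _ = ‖A‖ * ‖A w‖ := by rw [hB, ContinuousLinearMap.adjoint.norm_map]
  have h3' : ‖u‖^2 ≤ ‖A‖^2 * ‖A w‖^2 := by
    have := pow_le_pow_left₀ (norm_nonneg u) h3 2
    calc ‖u‖^2 ≤ (‖A‖*‖A w‖)^2 := this
    _ = ‖A‖^2 * ‖A w‖^2 := by ring
  have h5 : τ^2*‖u‖^2 ≤ τ * ‖A w‖^2 := by
    calc τ^2*‖u‖^2 ≤ τ^2 * (‖A‖^2*‖A w‖^2) :=
          mul_le_mul_of_nonneg_left h3' (sq_nonneg τ)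
    _ = (τ*‖A‖^2)*(τ*‖A w‖^2) := by ring
    _ ≤ 1*(τ*‖A w‖^2) :=
          mul_le_mul_of_nonneg_right hA (mul_nonneg hτ.le (sq_nonneg _))
    _ = τ*‖A w‖^2 := one_mul _
  have hsq : ‖w - τ • u‖^2 ≤ ‖w‖^2 := by
    rw [h1, h2]
    have : 0 ≤ τ * ‖A w‖^2 := mul_nonneg hτ.le (sq_nonneg _)
    linarith
  exact (pow_le_pow_iff_left₀ (norm_nonneg _) (norm_nonneg _) two_ne_zero).mp hsq

lemma ist_contract {n m : ℕ} (A : EuclideanSpace ℝ (Fin n) →L[ℝ] EuclideanSpace ℝ (Fin m))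
    (y : EuclideanSpace ℝ (Fin m)) {lam μ τ : ℝ}
    (hlam : 0 ≤ lam) (hμ : 0 < μ) (hτ : 0 < τ) (hA : τ * ‖A‖^2 ≤ 1)
    (u v : EuclideanSpace ℝ (Fin n)) :
    ‖istMap A y lam μ τ u - istMap A y lam μ τ v‖ ≤ (1 + μ*τ)⁻¹ * ‖u - v‖ := by
  set B := ContinuousLinearMap.adjoint A with hB
  set r : ℝ := (1 + μ*τ)⁻¹ with hr
  have hrpos : 0 < r := by rw [hr]; positivity
  set p := r • (u + τ • B (y - A u)) with hp
  set q := r • (v + τ • B (y - A v)) with hq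
  have hβ : 0 ≤ lam * τ / (μ * τ + 1) := by positivity
  have step1 : ‖istMap A y lam μ τ u - istMap A y lam μ τ v‖ ≤ ‖p - q‖ := by
    apply euc_norm_le
    intro i
    rw [PiLp.sub_apply, PiLp.sub_apply]
    exact softThresh_lip hβ (p i) (q i)
  have hArw : y - A u = (y - A v) - A (u - v) := by rw [map_sub]; abel
  have step2 : p - q = r • ((u - v) - τ • B (A (u - v))) := by
    rw [hp, hq, hArw, map_sub]
    module
  have step3 : ‖p - q‖ ≤ r * ‖u - v‖ := by
    rw [step2, norm_smul, Real.norm_eq_abs, abs_of_pos hrpos]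
    exact mul_le_mul_of_nonneg_left (key_op_bound A hτ hA (u - v)) hrpos.le
  exact le_trans step1 step3

lemma ist_fixed {n m : ℕ} (A : EuclideanSpace ℝ (Fin n) →L[ℝ] EuclideanSpace ℝ (Fin m))
    (y : EuclideanSpace ℝ (Fin m)) {lam μ τ : ℝ}
    (hlam : 0 < lam) (hμ : 0 < μ) (hτ : 0 < τ) (hA : τ * ‖A‖^2 ≤ 1)
    (z : EuclideanSpace ℝ (Fin n)) (hz : ∀ w, enet A y lam μ z ≤ enet A y lam μ w) :
    istMap A y lam μ τ z = z := by
  set B := ContinuousLinearMap.adjoint A with hB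
  set c := B (y - A z) with hc
  set a : ℝ := μ + 1/τ with ha'
  have ha : 0 < a := by rw [ha']; positivity
  set b : Fin n → ℝ := fun i => c i + z i / τ with hb
  set w := istMap A y lam μ τ z with hw
  have hwi : ∀ i, w i = softThresh (lam/a) (b i/a) := by
    intro i
    rw [hw]; simp only [istMap, softThreshVec, PiLp.toLp_apply, PiLp.smul_apply, PiLp.add_apply, smul_eq_mul]
    show softThresh (lam * τ / (μ * τ + 1)) ((1 + μ * τ)⁻¹ * (z i + τ * c i)) = _
    have e1 : lam * τ / (μ * τ + 1) = lam / a := by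
      rw [ha']; rw [div_eq_div_iff (by positivity) (by positivity)]; field_simp
    have e2 : (1 + μ * τ)⁻¹ * (z i + τ * c i) = b i / a := by
      rw [hb]; simp only; rw [ha', eq_div_iff (by positivity), inv_mul_eq_div,
        div_mul_eq_mul_div, div_eq_iff (by positivity : (1:ℝ) + μ*τ ≠ 0)]
      field_simp; ring
    rw [e1, e2]
  set G : EuclideanSpace ℝ (Fin n) → ℝ :=
    fun v => ∑ i, (a/2*(v i)^2 - b i*(v i) + lam*|v i|) with hG
  clear_value B c a b w G
  -- Claim A : strong optimality of w for G
  have claimA : G w + a/2 * ∑ i, (z i - w i)^2 ≤ G z := by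
    rw [hG]
    simp only
    rw [Finset.mul_sum, ← Finset.sum_add_distrib]
    apply Finset.sum_le_sum
    intro i _
    have h := softThresh_opt (b i) ha hlam.le (z i)
    rw [← hwi i] at h
    linarith
  -- Claim B : enet v - enet z ≤ G v - G z
  have claimB : ∀ v, enet A y lam μ v - enet A y lam μ z ≤ G v - G z := by
    intro v
    have hAd : τ * ‖A (v - z)‖^2 ≤ ‖v - z‖^2 := by
      have h4 := A.le_opNorm (v - z)
      have h5 : ‖A (v-z)‖^2 ≤ ‖A‖^2 * ‖v-z‖^2 := by
        have := pow_le_pow_left₀ (norm_nonneg _) h4 2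
        calc ‖A (v-z)‖^2 ≤ (‖A‖*‖v-z‖)^2 := this
        _ = ‖A‖^2*‖v-z‖^2 := by ring
      calc τ * ‖A (v - z)‖^2 ≤ τ * (‖A‖^2 * ‖v-z‖^2) :=
            mul_le_mul_of_nonneg_left h5 hτ.le
      _ = (τ*‖A‖^2)*‖v-z‖^2 := by ring
      _ ≤ 1*‖v-z‖^2 := mul_le_mul_of_nonneg_right hA (sq_nonneg _)
      _ = ‖v-z‖^2 := one_mul _
    have hsplit : ‖y - A v‖^2 = ‖y - A z‖^2 - 2*⟪c, v - z⟫ + ‖A (v - z)‖^2 := by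
      have e : y - A v = (y - A z) - A (v - z) := by rw [map_sub]; abel
      rw [e, norm_sub_sq_real]
      have e2 : ⟪y - A z, A (v - z)⟫ = ⟪c, v - z⟫ := by
        rw [hc, hB, ContinuousLinearMap.adjoint_inner_left]
      rw [e2]
    have hnormid : ‖v‖^2 - ‖z‖^2 - 2*⟪z, v - z⟫ = ‖v - z‖^2 := by
      rw [norm_sub_sq_real, inner_sub_right, real_inner_self_eq_norm_sq,
        real_inner_comm z v]
      ring
    have hGdiff : G v - G z = (μ/2 + 1/(2*τ))*(‖v‖^2 - ‖z‖^2)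
        - ⟪c, v - z⟫ - (1/τ)*⟪z, v - z⟫ + lam*(l1norm v - l1norm z) := by
      rw [hG]
      simp only
      rw [euc_norm_sq v, euc_norm_sq z, euc_inner_sum c (v - z), euc_inner_sum z (v - z)]
      unfold l1norm
      simp only [mul_sub, Finset.mul_sum, ← Finset.sum_sub_distrib, ← Finset.sum_add_distrib]
      apply Finset.sum_congr rfl
      intro i _
      have hdi : (v - z) i = v i - z i := rfl
      rw [hb, ha', hdi]
      simp only
      field_simp
      ring
    unfold enet
    rw [hsplit, hGdiff]
    have hl : (1/(2*τ))*(‖v‖^2 - ‖z‖^2) - (1/τ)*⟪z, v - z⟫ = (1/(2*τ))*‖v - z‖^2 := by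
      rw [← hnormid]; field_simp
    have hAd' : (1/2)*‖A (v - z)‖^2 ≤ (1/(2*τ))*‖v - z‖^2 := by
      rw [div_mul_eq_mul_div, div_mul_eq_mul_div,
        div_le_div_iff₀ (by norm_num) (by positivity : (0:ℝ) < 2*τ)]
      nlinarith [hAd]
    linarith [hAd', hl]
  -- combine
  have h1 := hz w
  have h2 := claimB w
  have hGw : G z ≤ G w := by linarith
  have h3' : a/2 * ∑ i, (z i - w i)^2 ≤ 0 := by linarith
  have h3 : ∑ i, (z i - w i)^2 ≤ 0 := by
    by_contra hcon
    push_neg at hcon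
    nlinarith [mul_pos ha hcon]
  have h4 : ∀ i ∈ Finset.univ, (0:ℝ) ≤ (z i - w i)^2 := fun i _ => sq_nonneg _
  have h5 := (Finset.sum_eq_zero_iff_of_nonneg h4).mp
    (le_antisymm h3 (Finset.sum_nonneg h4))
  ext i
  have := h5 i (Finset.mem_univ i)
  have := pow_eq_zero_iff (n := 2) (by norm_num) |>.mp this
  linarith

theorem batch_ist_converges {n m : ℕ}
    (A : EuclideanSpace ℝ (Fin n) →L[ℝ] EuclideanSpace ℝ (Fin m))
    (y : EuclideanSpace ℝ (Fin m)) (lam μ τ : ℝ)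
    (hlam : 0 < lam) (hμ : 0 < μ) (hτ : 0 < τ) (hA : τ * ‖A‖^2 ≤ 1)
    (z : EuclideanSpace ℝ (Fin n)) (hz : ∀ w, enet A y lam μ z ≤ enet A y lam μ w)
    (x : ℕ → EuclideanSpace ℝ (Fin n)) (hx0 : x 0 = 0)
    (hrec : ∀ t : ℕ, x (t + 1) = istMap A y lam μ τ (x t)) :
    (∀ t : ℕ, ‖x t - z‖ ≤ ((1 + μ * τ)⁻¹)^t * ‖x 0 - z‖) ∧
    Filter.Tendsto x Filter.atTop (nhds z) := by
  have hfix := ist_fixed A y hlam hμ hτ hA z hz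
  set r : ℝ := (1 + μ*τ)⁻¹ with hr
  have hr0 : 0 ≤ r := by rw [hr]; positivity
  have hr1 : r < 1 := by
    rw [hr]
    rw [inv_lt_one_iff₀]
    right; nlinarith
  have bound : ∀ t : ℕ, ‖x t - z‖ ≤ r^t * ‖x 0 - z‖ := by
    intro t
    induction t with
    | zero => simp
    | succ t ih =>
      have : ‖x (t+1) - z‖ ≤ r * ‖x t - z‖ := by
        rw [hrec t]
        calc ‖istMap A y lam μ τ (x t) - z‖
            = ‖istMap A y lam μ τ (x t) - istMap A y lam μ τ z‖ := by rw [hfix]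
        _ ≤ r * ‖x t - z‖ := ist_contract A y hlam.le hμ hτ hA (x t) z
      calc ‖x (t+1) - z‖ ≤ r * ‖x t - z‖ := this
      _ ≤ r * (r^t * ‖x 0 - z‖) := mul_le_mul_of_nonneg_left ih hr0
      _ = r^(t+1) * ‖x 0 - z‖ := by rw [pow_succ]; ring
  refine ⟨bound, ?_⟩
  rw [tendsto_iff_norm_sub_tendsto_zero]
  apply squeeze_zero (fun t => norm_nonneg _) bound
  have := (tendsto_pow_atTop_nhds_zero_of_lt_one hr0 hr1).mul_const ‖x 0 - z‖
  simpa using this
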